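/- Let H = {x ∈ ℝ^m : cᵀx ≤ d} be a halfspace with c ∈ ℤ^m whose entries have greatest common divisor 1, and d ∈ ℚ. Then the integer hull of H (the convex hull of the integer points of H) equals {x ∈ ℝ^m : cᵀx ≤ ⌊d⌋}. -/

import Mathlib

open Finset

theorem finset_bezout {α : Type*} [DecidableEq α] (s : Finset α) (c : α → ℤ) :
    ∃ u : α → ℤ, ∑ i ∈ s, u i * c i = s.gcd c := by
  induction s using Finset.induction_on with
  | empty => exact ⟨0, by simp⟩
  | @insert a s ha ih =>
    obtain ⟨u, hu⟩ := ih
    refine ⟨fun i => if i = a then Int.gcdA (c a) (s.gcd c)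
      else Int.gcdB (c a) (s.gcd c) * u i, ?_⟩
    rw [Finset.sum_insert ha, Finset.gcd_insert]
    have h1 : (GCDMonoid.gcd (c a) (s.gcd c) : ℤ) =
        c a * Int.gcdA (c a) (s.gcd c) + s.gcd c * Int.gcdB (c a) (s.gcd c) :=
      Int.gcd_eq_gcd_ab _ _
    have h2 : ∑ i ∈ s, (if i = a then Int.gcdA (c a) (s.gcd c)
        else Int.gcdB (c a) (s.gcd c) * u i) * c i
        = Int.gcdB (c a) (s.gcd c) * ∑ i ∈ s, u i * c i := by
      rw [Finset.mul_sum]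
      apply Finset.sum_congr rfl
      intro i hi
      rw [if_neg (by rintro rfl; exact ha hi)]
      ring
    rw [h2, hu, h1]; simp only [if_true, eq_self_iff_true]
    ring

theorem sum_mul_add {m : ℕ} (c q v : Fin m → ℤ) (a : ℤ) :
    ∑ i, c i * (q + a • v) i = ∑ i, c i * q i + a * ∑ i, c i * v i := by
  rw [Finset.mul_sum, ← Finset.sum_add_distrib]
  apply Finset.sum_congr rfl
  intro i _
  simp only [Pi.add_apply, Pi.smul_apply, smul_eq_mul]
  ring

theorem step_single {m : ℕ} (c : Fin m → ℤ) (N : ℤ) (S : Set (Fin m → ℝ))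
    (hS : ∀ p : Fin m → ℤ, (∑ i, c i * p i) ≤ N → (fun i => (p i : ℝ)) ∈ S)
    (q v : Fin m → ℤ) (hq : ∑ i, c i * q i ≤ N) (s : ℝ)
    (hv : (∑ i, c i * v i = 0) ∨ ((∑ i, c i * v i ≤ 0) ∧ 0 ≤ s)) :
    ((fun i => (q i : ℝ)) + s • fun i => (v i : ℝ)) ∈ convexHull ℝ S := by
  have hC : Convex ℝ (convexHull ℝ S) := convex_convexHull ℝ S
  have hsub := subset_convexHull ℝ S
  rcases hv with hv | ⟨hv, hs⟩
  · set n : ℕ := ⌈|s|⌉₊ + 1 with hn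
    have hnpos : (0:ℝ) < n := by positivity
    have habs : |s| ≤ (n:ℝ) := by
      calc |s| ≤ (⌈|s|⌉₊ : ℝ) := Nat.le_ceil _
        _ ≤ (n:ℝ) := by exact_mod_cast Nat.le_succ _
    have hp1 : (fun i => ((q + (n:ℤ) • v) i : ℝ)) ∈ convexHull ℝ S := by
      apply hsub; apply hS; rw [sum_mul_add, hv]; simpa using hq
    have hp2 : (fun i => ((q + (-(n:ℤ)) • v) i : ℝ)) ∈ convexHull ℝ S := by
      apply hsub; apply hS; rw [sum_mul_add, hv]; simpa using hq
    have key := hC hp1 hp2 (a := ((n:ℝ) + s)/(2*n)) (b := ((n:ℝ) - s)/(2*n))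
      (by rw [div_nonneg_iff]; left
          constructor
          · linarith [neg_abs_le s, habs]
          · linarith)
      (by rw [div_nonneg_iff]; left
          constructor
          · linarith [le_abs_self s]
          · linarith)
      (by field_simp; ring)
    convert key using 1
    funext j
    simp only [Pi.add_apply, Pi.smul_apply, smul_eq_mul, Int.cast_add, Int.cast_mul,
      Int.cast_neg, Int.cast_natCast, Pi.intCast_apply]
    push_cast
    field_simp
    ring
  · set n : ℕ := ⌈s⌉₊ + 1 with hn
    have hnpos : (0:ℝ) < n := by positivity
    have hsn : s ≤ (n:ℝ) := by
      calc s ≤ (⌈s⌉₊ : ℝ) := Nat.le_ceil _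
        _ ≤ (n:ℝ) := by exact_mod_cast Nat.le_succ _
    have hp1 : (fun i => ((q + (n:ℤ) • v) i : ℝ)) ∈ convexHull ℝ S := by
      apply hsub; apply hS; rw [sum_mul_add]
      have : (n:ℤ) * ∑ i, c i * v i ≤ 0 := mul_nonpos_of_nonneg_of_nonpos (by positivity) hv
      linarith
    have hp2 : (fun i => (q i : ℝ)) ∈ convexHull ℝ S := hsub (hS q hq)
    have key := hC hp1 hp2 (a := s/n) (b := 1 - s/n)
      (by positivity)
      (by rw [sub_nonneg, div_le_one hnpos]; exact hsn)
      (by ring)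
    convert key using 1
    funext j
    simp only [Pi.add_apply, Pi.smul_apply, smul_eq_mul]
    push_cast
    field_simp
    ring
theorem halfspace_mem_hull {m : ℕ} (c : Fin m → ℤ) (u : Fin m → ℤ)
    (hu : ∑ i, u i * c i = 1) (k : Fin m) (hk : c k ≠ 0) (N : ℤ)
    (S : Set (Fin m → ℝ))
    (hS : ∀ p : Fin m → ℤ, (∑ i, c i * p i) ≤ N → (fun i => (p i : ℝ)) ∈ S)
    (x : Fin m → ℝ) (hx : ∑ i, (c i : ℝ) * x i ≤ (N : ℝ)) :
    x ∈ convexHull ℝ S := by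
  classical
  set q0 : Fin m → ℤ := fun i => N * u i with hq0def
  have hq0 : ∑ i, c i * q0 i = N := by
    have : ∑ i, c i * q0 i = N * ∑ i, u i * c i := by
      rw [Finset.mul_sum]; apply Finset.sum_congr rfl; intro i _; simp [hq0def]; ring
    rw [this, hu, mul_one]
  set t : ℝ := (N : ℝ) - ∑ i, (c i : ℝ) * x i with ht
  have htnn : 0 ≤ t := by simp [ht]; linarith
  set w0 : Fin m → ℝ := fun j => x j - (q0 j : ℝ) + t * (u j : ℝ) with hw0
  have hcu : ∑ i, (c i : ℝ) * (u i : ℝ) = 1 := by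
    have : ((∑ i, u i * c i : ℤ) : ℝ) = ((1:ℤ):ℝ) := by rw [hu]
    push_cast at this
    rw [← this]; apply Finset.sum_congr rfl; intro i _; ring
  have hw0sum : ∑ j, (c j : ℝ) * w0 j = 0 := by
    simp only [hw0, mul_sub, mul_add, Finset.sum_sub_distrib, Finset.sum_add_distrib]
    have h1 : ∑ j, (c j : ℝ) * (q0 j : ℝ) = (N:ℝ) := by
      have := hq0
      have := congrArg (fun z : ℤ => (z : ℝ)) hq0
      push_cast at this
      exact this
    have h2 : ∑ j, (c j : ℝ) * (t * (u j : ℝ)) = t := by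
      have : ∑ j, (c j : ℝ) * (t * (u j : ℝ)) = t * ∑ j, (c j:ℝ) * (u j:ℝ) := by
        rw [Finset.mul_sum]; exact Finset.sum_congr rfl fun j _ => by ring
      rw [this, hcu, mul_one]
    rw [h1, h2]
    simp [ht]
  -- the kernel basis vectors
  set f : Fin m → Fin m → ℤ := fun i j =>
    c k * (if j = i then 1 else 0) - c i * (if j = k then 1 else 0) with hfdef
  have hf : ∀ i, ∑ j, c j * f i j = 0 := by
    intro i
    simp only [hfdef, mul_sub, Finset.sum_sub_distrib, mul_ite, mul_one, mul_zero]
    rw [Finset.sum_ite_eq' Finset.univ i (fun j => c j * c k),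
        Finset.sum_ite_eq' Finset.univ k (fun j => c j * c i)]
    simp [mul_comm]
  set a : Fin m → ℝ := fun i => w0 i / (c k : ℝ) with hadef
  have hdecomp : ∀ j, ∑ i, a i * (f i j : ℝ) = w0 j := by
    intro j
    have hck : (c k : ℝ) ≠ 0 := Int.cast_ne_zero.2 hk
    simp only [hadef, hfdef]
    push_cast
    simp only [mul_sub, Finset.sum_sub_distrib, mul_ite, mul_one, mul_zero]
    rw [Finset.sum_ite_eq Finset.univ j (fun i => w0 i / (c k:ℝ) * (c k:ℝ))]
    simp only [Finset.mem_univ, if_true]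
    by_cases hjk : j = k
    · simp only [hjk, eq_self_iff_true, if_true]
      have : ∑ i, (w0 i / (c k:ℝ) * (c i : ℝ)) = (∑ i, (c i:ℝ) * w0 i) / (c k:ℝ) := by
        rw [Finset.sum_div]; exact Finset.sum_congr rfl fun i _ => by ring
      rw [this, hw0sum]
      field_simp
      simp
    · simp only [if_neg hjk, Finset.sum_const_zero]
      field_simp
      simp
  -- assemble convex combination
  set M : ℝ := (m : ℝ) + 1 with hM
  have hMpos : (0:ℝ) < M := by positivity
  have hcuint : ∑ i, c i * u i = 1 := by
    rw [← hu]; exact Finset.sum_congr rfl fun i _ => mul_comm _ _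
  set z : Option (Fin m) → (Fin m → ℝ) := fun o =>
    match o with
    | none => (fun i => (q0 i : ℝ)) + (M * t) • fun i => (((-u) i : ℝ))
    | some i => (fun j => (q0 j : ℝ)) + (M * a i) • fun j => ((f i j : ℝ)) with hz
  have hq0le : ∑ i, c i * q0 i ≤ N := le_of_eq hq0
  have hmem : ∀ o : Option (Fin m), z o ∈ convexHull ℝ S := by
    intro o
    match o with
    | none =>
        apply step_single c N S hS q0 (-u) hq0le (M * t)
        refine Or.inr ⟨?_, ?_⟩
        · have : ∑ i, c i * (-u) i = -∑ i, c i * u i := by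
            rw [← Finset.sum_neg_distrib]
            exact Finset.sum_congr rfl fun i _ => by simp
          rw [this, hcuint]; norm_num
        · positivity
    | some i =>
        exact step_single c N S hS q0 (f i) hq0le (M * a i) (Or.inl (hf i))
  have key := (convex_convexHull ℝ S).sum_mem (t := (Finset.univ : Finset (Option (Fin m))))
    (w := fun _ => 1/M) (z := z)
    (fun _ _ => by positivity)
    (by rw [Finset.sum_const]
        simp only [Finset.card_univ, Fintype.card_option, Fintype.card_fin, nsmul_eq_mul]
        push_cast
        field_simp
        rw [hM])
    (fun o _ => hmem o)
  have hxeq : (∑ o : Option (Fin m), (fun _ : Option (Fin m) => 1/M) o • z o) = x := by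
    funext j
    rw [Finset.sum_apply, Fintype.sum_option]
    simp only [hz, Pi.smul_apply, smul_eq_mul, Pi.add_apply, Pi.neg_apply, Int.cast_neg]
    have hterm : ∀ i : Fin m, (1/M) * ((q0 j:ℝ) + (M * a i) * (f i j:ℝ))
        = (1/M) * (q0 j:ℝ) + a i * (f i j:ℝ) := by
      intro i; field_simp
    rw [Finset.sum_congr rfl (fun i _ => hterm i), Finset.sum_add_distrib,
      Finset.sum_const, hdecomp j]
    simp only [Finset.card_univ, Fintype.card_fin, nsmul_eq_mul]
    have hw0j : w0 j = x j - (q0 j:ℝ) + t * (u j : ℝ) := rfl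
    rw [hw0j]
    field_simp
    ring
  rw [← hxeq]
  exact key

theorem integer_hull_of_rational_halfspace {m : ℕ} (c : Fin m → ℤ)
    (hgcd : Finset.univ.gcd c = 1) (d : ℚ) :
    convexHull ℝ
        {x : Fin m → ℝ |
          (∑ i, (c i : ℝ) * x i ≤ (d : ℝ)) ∧ ∀ i, ∃ z : ℤ, x i = (z : ℝ)}
      = {x : Fin m → ℝ | ∑ i, (c i : ℝ) * x i ≤ ((⌊d⌋ : ℤ) : ℝ)} := by
  classical
  obtain ⟨k, hk⟩ : ∃ k, c k ≠ 0 := by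
    by_contra h
    push_neg at h
    have : Finset.univ.gcd c = 0 := Finset.gcd_eq_zero_iff.2 fun i _ => h i
    rw [this] at hgcd
    exact absurd hgcd (by norm_num)
  obtain ⟨u, hu⟩ := finset_bezout Finset.univ c
  rw [hgcd] at hu
  set S : Set (Fin m → ℝ) :=
    {x : Fin m → ℝ |
      (∑ i, (c i : ℝ) * x i ≤ (d : ℝ)) ∧ ∀ i, ∃ z : ℤ, x i = (z : ℝ)} with hSdef
  have hS : ∀ p : Fin m → ℤ, (∑ i, c i * p i) ≤ ⌊d⌋ → (fun i => (p i : ℝ)) ∈ S := by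
    intro p hp
    constructor
    · have h1 : ∑ i, (c i : ℝ) * ((p i : ℤ) : ℝ) = ((∑ i, c i * p i : ℤ) : ℝ) := by
        push_cast; rfl
      rw [h1]
      have h2 : ((∑ i, c i * p i : ℤ) : ℝ) ≤ ((⌊d⌋ : ℤ) : ℝ) := by exact_mod_cast hp
      have h3 : ((⌊d⌋ : ℤ) : ℝ) ≤ (d : ℝ) := by
        have := Int.floor_le d
        exact_mod_cast this
      linarith
    · exact fun i => ⟨p i, rfl⟩
  apply Set.Subset.antisymm
  · apply convexHull_min
    · rintro x ⟨hx1, hx2⟩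
      choose zz hz using hx2
      have hxz : x = fun i => ((zz i : ℤ) : ℝ) := funext hz
      have h1 : ∑ i, (c i : ℝ) * x i = ((∑ i, c i * zz i : ℤ) : ℝ) := by
        rw [hxz]; push_cast; rfl
      have h2 : ((∑ i, c i * zz i : ℤ) : ℚ) ≤ d := by
        rw [h1] at hx1
        exact_mod_cast hx1
      have h3 : (∑ i, c i * zz i) ≤ ⌊d⌋ := Int.le_floor.2 h2
      show ∑ i, (c i : ℝ) * x i ≤ ((⌊d⌋ : ℤ) : ℝ)
      rw [h1]
      exact_mod_cast h3
    · show Convex ℝ {x : Fin m → ℝ | ∑ i, (c i : ℝ) * x i ≤ ((⌊d⌋ : ℤ) : ℝ)}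
      apply convex_halfSpace_le
      constructor
      · intro y₁ y₂
        simp only [Pi.add_apply, mul_add]
        rw [Finset.sum_add_distrib]
      · intro r y
        simp only [Pi.smul_apply, smul_eq_mul, Finset.mul_sum]
        exact Finset.sum_congr rfl fun i _ => by ring
  · intro x hx
    exact halfspace_mem_hull c u hu k hk ⌊d⌋ S hS x hx
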